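/- arXiv:2301.05414 — 2 statements merged into one kernel-verified Lean document; each statement's English description precedes it below -/
import Mathlib

section
/- (Proposition: complete form J^{(2ν,1)}_ℓ, even order m = 2ν.) Let ν ≥ 1, ℓ ≥ 0. Suppose given smooth totally symmetric tensor fields L_{(2N−1)i₁...i_r} for odd ranks r ∈ {1,3,…,2ν−1} and N = 1,…,ℓ, L_{(2N)i₁...i_r} for even ranks r ∈ {2,4,…,2ν} and N = 0,…,ℓ, and a smooth function G(q), such that: (i) L_{(0)i₁...i_{2ν}} is a (2ν)-th order generalized Killing tensor, and for N = 1,…,ℓ the tensors L_{(2N)i₁...i_{2ν}} = −(1/(2N)) L_{(2N−1)(i₁...i_{2ν−1}|i_{2ν})} are (2ν)-th order generalized Killing tensors; (ii) G_{,i₁} = 2 L_{(0)i₁i₂} Q^{i₂} − L_{(1)i₁}, with the term L_{(1)i₁} present only if ℓ > 0; (iii) for N = 1,…,ℓ: (L_{(2N−1)c}Q^c)_{,i₁} = 4N L_{(2N)i₁i₂} Q^{i₂} − 2N(2N+1) L_{(2N+1)i₁}, the last term present only if N < ℓ; (iv) for ν > 1, N = 1,…,ℓ and even r ∈ {2,4,…,2ν−2}: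 L_{(2N−1)(i₁...i_{r−1}|i_r)} = (r+1) L_{(2N−1)i₁...i_r i_{r+1}} Q^{i_{r+1}} − 2N L_{(2N)i₁...i_r}; (v) for ν > 1, N = 0,…,ℓ and odd r ∈ {3,5,…,2ν−1}: L_{(2N)(i₁...i_{r−1}|i_r)} = (r+1) L_{(2N)i₁...i_r i_{r+1}} Q^{i_{r+1}} − (2N+1) L_{(2N+1)i₁...i_r}, the last term present only if N < ℓ. Then J = Σ_{odd r ≤ 2ν} Σ_{N=1}^{ℓ} t^{2N−1} L_{(2N−1)i₁...i_r} q̇^{i₁}⋯q̇^{i_r} + Σ_{even r ≤ 2ν} Σ_{N=0}^{ℓ} t^{2N} L_{(2N)i₁...i_r} q̇^{i₁}⋯q̇^{i_r} + Σ_{N=1}^{ℓ} (L_{(2N−1)c}Q^c) t^{2N}/(2N) + G(q) is a first integral of q̈^a = −Γ^a_{bc}q̇^bq̇^c − Q^a. -/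
noncomputable section
open scoped BigOperators

/-- Points of the configuration space `ℝ^D`. -/
abbrev Vec (D : ℕ) := Fin D → ℝ

/-- Connection coefficients: `Conn D Γ` with `Γ q a b c = Γ^a_{bc}(q)`. -/
abbrev Conn (D : ℕ) := Vec D → Fin D → Fin D → Fin D → ℝ

/-- Totally covariant `r`-tensor fields on `ℝ^D`. -/
abbrev Tens (D r : ℕ) := Vec D → (Fin r → Fin D) → ℝ

/-- Partial derivative `∂f/∂q^j`. -/
def pd {D : ℕ} (j : Fin D) (f : Vec D → ℝ) (q : Vec D) : ℝ :=
  fderiv ℝ f q (Pi.single j 1)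

/-- Covariant derivative `T_{i₁...i_r|j}` (the last slot is the derivative index `j`):
`T_{i₁...i_r|j} = ∂T_{i₁...i_r}/∂q^j − Σ_k Γ^s_{i_k j} T_{i₁...s...i_r}`. -/
def covTens {D r : ℕ} (Γ : Conn D) (T : Tens D r) : Tens D (r + 1) :=
  fun q idx =>
    pd (idx (Fin.last r)) (fun p => T p fun k => idx k.castSucc) q
      - ∑ k : Fin r, ∑ s : Fin D,
          Γ q s (idx k.castSucc) (idx (Fin.last r)) *
            T q (Function.update (fun l => idx l.castSucc) k s)

/-- Symmetrization of a tensor over all of its indices. -/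
def symT {D r : ℕ} (T : Tens D r) : Tens D r :=
  fun q idx => (r.factorial : ℝ)⁻¹ * ∑ σ : Equiv.Perm (Fin r), T q (idx ∘ σ)

/-- Totally symmetric tensor field. -/
def IsSymTens {D r : ℕ} (T : Tens D r) : Prop :=
  ∀ (q : Vec D) (idx : Fin r → Fin D) (σ : Equiv.Perm (Fin r)), T q (idx ∘ σ) = T q idx

/-- Smooth tensor field. -/
def SmoothTens {D r : ℕ} (T : Tens D r) : Prop :=
  ∀ idx : Fin r → Fin D, ContDiff ℝ (⊤ : ℕ∞) fun q => T q idx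

/-- Generalized Killing tensor of order `r` for the connection `Γ`:
`T_{(i₁...i_r|i_{r+1})} = 0`. -/
def IsGenKT {D r : ℕ} (Γ : Conn D) (T : Tens D r) : Prop :=
  ∀ q idx, symT (covTens Γ T) q idx = 0

/-- `q, v` solve `q̈^a = -Γ^a_{bc}(q) q̇^b q̇^c - Q^a(q)` on the set `s ⊆ ℝ`. -/
def IsSolutionOn {D : ℕ} (Γ : Conn D) (Q : Vec D → Fin D → ℝ)
    (s : Set ℝ) (q v : ℝ → Vec D) : Prop :=
  ∀ t ∈ s, ∀ a : Fin D,
    HasDerivAt (fun τ => q τ a) (v t a) t ∧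
    HasDerivAt (fun τ => v τ a)
      (-(∑ b, ∑ c, Γ (q t) a b c * v t b * v t c) - Q (q t) a) t

/-- `I(t,q,q̇)` is a first integral of the system: it is constant along every
(C²) solution defined on an open interval. -/
def FirstIntegral {D : ℕ} (Γ : Conn D) (Q : Vec D → Fin D → ℝ)
    (I : ℝ → Vec D → Vec D → ℝ) : Prop :=
  ∀ (a b : ℝ) (q v : ℝ → Vec D), IsSolutionOn Γ Q (Set.Ioo a b) q v →
    ∀ t₁ ∈ Set.Ioo a b, ∀ t₂ ∈ Set.Ioo a b,
      I t₁ (q t₁) (v t₁) = I t₂ (q t₂) (v t₂)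

/-- The contraction `L_c Q^c` of a rank-1 tensor with the generalized forces. -/
def dotQ {D : ℕ} (L : Tens D 1) (Q : Vec D → Fin D → ℝ) (q : Vec D) : ℝ :=
  ∑ c, L q (fun _ => c) * Q q c
section AuxLemmas

variable {D : ℕ}

/-- Contraction of a tensor with `r` copies of `v`. -/
def ctr {D r : ℕ} (T : Tens D r) (q v : Vec D) : ℝ :=
  ∑ idx : Fin r → Fin D, T q idx * ∏ k, v (idx k)

/-- Contraction with the force `Q` on the last slot and `v` on the rest. -/
def qsv {D r : ℕ} (Q : Vec D → Fin D → ℝ) (T : Tens D (r + 1)) (q v : Vec D) : ℝ :=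
  ∑ idx : Fin r → Fin D, (∑ j, T q (Fin.snoc idx j) * Q q j) * ∏ k, v (idx k)

lemma sum_snoc_split {r : ℕ} (F : (Fin (r + 1) → Fin D) → ℝ) :
    (∑ idx : Fin (r + 1) → Fin D, F idx)
      = ∑ g : Fin r → Fin D, ∑ j : Fin D, F (Fin.snoc g j) := by
  rw [← Equiv.sum_comp (Fin.snocEquiv (fun _ => Fin D)) F, Fintype.sum_prod_type,
    Finset.sum_comm]
  rfl

lemma prod_erase_last {r : ℕ} (f : Fin (r + 1) → ℝ) :
    ∏ l ∈ Finset.univ.erase (Fin.last r), f l = ∏ k : Fin r, f k.castSucc := by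
  have h : (Finset.univ.erase (Fin.last r)) = Finset.univ.image Fin.castSucc := by
    ext x
    simp only [Finset.mem_erase, Finset.mem_univ, and_true, Finset.mem_image, true_and]
    constructor
    · intro hx
      exact Fin.exists_castSucc_eq.mpr hx
    · rintro ⟨y, rfl⟩
      exact Fin.castSucc_lt_last y |>.ne
  rw [h, Finset.prod_image (fun x _ y _ h => Fin.castSucc_injective r h)]

lemma ctr_symT {r : ℕ} (T : Tens D r) (q v : Vec D) : ctr (symT T) q v = ctr T q v := by
  unfold ctr symT
  have key : ∀ σ : Equiv.Perm (Fin r),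
      (∑ idx : Fin r → Fin D, T q (idx ∘ σ) * ∏ k, v (idx k))
        = ∑ idx : Fin r → Fin D, T q idx * ∏ k, v (idx k) := by
    intro σ
    have := Equiv.sum_comp (Equiv.arrowCongr σ (Equiv.refl (Fin D)))
      (fun idx : Fin r → Fin D => T q (idx ∘ σ) * ∏ k, v (idx k))
    rw [← this]
    refine Finset.sum_congr rfl fun idx _ => ?_
    have h1 : ((Equiv.arrowCongr σ (Equiv.refl (Fin D))) idx ∘ σ) = idx := by
      funext k; simp [Equiv.arrowCongr]
    rw [h1]
    congr 1
    rw [← Equiv.prod_comp σ.symm (fun k => v (idx k))]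
    refine Finset.prod_congr rfl fun k _ => ?_
    simp [Equiv.arrowCongr]
  simp_rw [Finset.mul_sum, Finset.sum_mul, mul_assoc]
  rw [Finset.sum_comm]
  simp_rw [← Finset.mul_sum, key, Finset.sum_const, Finset.card_univ, Fintype.card_perm,
    nsmul_eq_mul, ← mul_assoc, Fintype.card_fin]
  rw [inv_mul_cancel₀ (by exact_mod_cast (Nat.factorial_pos r).ne'), one_mul]
lemma qt_eq {r : ℕ} (Q : Vec D → Fin D → ℝ) (T : Tens D (r + 1)) (hT : IsSymTens T)
    (q v : Vec D) :
    (∑ idx : Fin (r + 1) → Fin D, T q idx *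
        ∑ k, Q q (idx k) * ∏ l ∈ Finset.univ.erase k, v (idx l))
      = ((r + 1 : ℕ) : ℝ) * qsv Q T q v := by
  have perk : ∀ k : Fin (r + 1),
      (∑ idx : Fin (r + 1) → Fin D, T q idx *
          (Q q (idx k) * ∏ l ∈ Finset.univ.erase k, v (idx l)))
        = qsv Q T q v := by
    intro k
    set s : Equiv.Perm (Fin (r + 1)) := Equiv.swap k (Fin.last r) with hs
    have himg : (Finset.univ.erase k).image s = Finset.univ.erase (Fin.last r) := by
      ext x
      simp only [Finset.mem_image, Finset.mem_erase, Finset.mem_univ, and_true, true_and]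
      constructor
      · rintro ⟨l, hl, rfl⟩
        intro hx
        apply hl
        have := s.injective (a₁ := l) (a₂ := k)
        apply this
        rw [hx, hs]
        simp [Equiv.swap_apply_left, Equiv.swap_apply_right]
      · intro hx
        refine ⟨s x, ?_, by simp [hs]⟩
        intro hc
        apply hx
        have : s (s x) = s k := by rw [hc]
        simpa [hs, Equiv.swap_apply_left] using this
    have reidx := Equiv.sum_comp (Equiv.arrowCongr s.symm (Equiv.refl (Fin D)))
      (fun idx : Fin (r + 1) → Fin D =>
        T q idx * (Q q (idx k) * ∏ l ∈ Finset.univ.erase k, v (idx l)))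
    rw [← reidx]
    have step : ∀ idx : Fin (r + 1) → Fin D,
        T q ((Equiv.arrowCongr s.symm (Equiv.refl (Fin D))) idx) *
            (Q q (((Equiv.arrowCongr s.symm (Equiv.refl (Fin D))) idx) k) *
              ∏ l ∈ Finset.univ.erase k,
                v (((Equiv.arrowCongr s.symm (Equiv.refl (Fin D))) idx) l))
          = T q idx * (Q q (idx (Fin.last r)) *
              ∏ l ∈ Finset.univ.erase (Fin.last r), v (idx l)) := by
      intro idx
      have harr : ((Equiv.arrowCongr s.symm (Equiv.refl (Fin D))) idx) = idx ∘ s := by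
        funext l; simp [Equiv.arrowCongr]
      rw [harr]
      congr 1
      · exact hT q idx s
      congr 1
      · simp [hs, Equiv.swap_apply_left]
      · rw [← himg, Finset.prod_image (fun a _ b _ hab => s.injective hab)]
        rfl
    simp_rw [step]
    rw [sum_snoc_split (fun idx => T q idx * (Q q (idx (Fin.last r)) *
      ∏ l ∈ Finset.univ.erase (Fin.last r), v (idx l)))]
    unfold qsv
    simp_rw [Fin.snoc_last, prod_erase_last, Fin.snoc_castSucc, Finset.sum_mul, mul_assoc]
  simp_rw [Finset.mul_sum]
  rw [Finset.sum_comm]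
  simp_rw [perk]
  rw [Finset.sum_const, Finset.card_univ, Fintype.card_fin, nsmul_eq_mul]
def updEquiv {D r : ℕ} (k : Fin r) : ((Fin r → Fin D) × Fin D) ≃ ((Fin r → Fin D) × Fin D) :=
  Function.Involutive.toPerm (fun p => (Function.update p.1 k p.2, p.1 k)) (by
    intro p
    simp [Function.update_idem])

lemma prod_update_erase {r : ℕ} (v : Vec D) (g : Fin r → Fin D) (k : Fin r) (s : Fin D) :
    ∏ l ∈ Finset.univ.erase k, v (Function.update g k s l)
      = ∏ l ∈ Finset.univ.erase k, v (g l) :=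
  Finset.prod_congr rfl fun l hl => by
    rw [Function.update_of_ne (Finset.mem_erase.mp hl).1]

lemma prod_split_k {r : ℕ} (v : Vec D) (g : Fin r → Fin D) (k : Fin r) :
    (∏ l, v (g l)) = v (g k) * ∏ l ∈ Finset.univ.erase k, v (g l) :=
  (Finset.mul_prod_erase _ _ (Finset.mem_univ k)).symm

lemma per2 {r : ℕ} (Γ : Conn D) (T : Tens D r) (q v : Vec D) (k : Fin r) :
    (∑ p : (Fin r → Fin D) × Fin D, ∑ j,
        Γ q p.2 (p.1 k) j * T q (Function.update p.1 k p.2) * ((∏ l, v (p.1 l)) * v j))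
      = ∑ g : Fin r → Fin D, T q g *
          ((∑ b, ∑ c, Γ q (g k) b c * v b * v c) * ∏ l ∈ Finset.univ.erase k, v (g l)) := by
  have key := Equiv.sum_comp (updEquiv (D := D) k)
    (fun p : (Fin r → Fin D) × Fin D =>
      T q p.1 * ((∑ c, Γ q (p.1 k) p.2 c * v p.2 * v c) * ∏ l ∈ Finset.univ.erase k, v (p.1 l)))
  calc (∑ p : (Fin r → Fin D) × Fin D, ∑ j,
        Γ q p.2 (p.1 k) j * T q (Function.update p.1 k p.2) * ((∏ l, v (p.1 l)) * v j))
      = ∑ p : (Fin r → Fin D) × Fin D,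
          (fun p : (Fin r → Fin D) × Fin D =>
            T q p.1 * ((∑ c, Γ q (p.1 k) p.2 c * v p.2 * v c) *
              ∏ l ∈ Finset.univ.erase k, v (p.1 l))) ((updEquiv (D := D) k) p) := by
        refine Finset.sum_congr rfl fun p _ => ?_
        simp only [updEquiv, Function.Involutive.toPerm, Equiv.coe_fn_mk,
          Function.update_self, prod_update_erase]
        rw [prod_split_k v p.1 k, Finset.sum_mul, Finset.mul_sum]
        exact Finset.sum_congr rfl fun c _ => by ring
    _ = ∑ p : (Fin r → Fin D) × Fin D,
          T q p.1 * ((∑ c, Γ q (p.1 k) p.2 c * v p.2 * v c) *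
            ∏ l ∈ Finset.univ.erase k, v (p.1 l)) := key
    _ = ∑ g : Fin r → Fin D, T q g *
          ((∑ b, ∑ c, Γ q (g k) b c * v b * v c) * ∏ l ∈ Finset.univ.erase k, v (g l)) := by
        rw [Fintype.sum_prod_type]
        refine Finset.sum_congr rfl fun g _ => ?_
        rw [Finset.sum_mul, Finset.mul_sum]

lemma ctr_covTens {r : ℕ} (Γ : Conn D) (T : Tens D r) (q v : Vec D) :
    ctr (covTens Γ T) q v
      = (∑ idx : Fin r → Fin D, (∑ j, v j * pd j (fun p => T p idx) q) * ∏ k, v (idx k))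
        - ∑ idx : Fin r → Fin D, T q idx *
            ∑ k : Fin r, (∑ b, ∑ c, Γ q (idx k) b c * v b * v c) *
              ∏ l ∈ Finset.univ.erase k, v (idx l) := by
  unfold ctr covTens
  rw [sum_snoc_split (fun idx : Fin (r + 1) → Fin D =>
    (pd (idx (Fin.last r)) (fun p => T p fun k => idx k.castSucc) q
      - ∑ k : Fin r, ∑ s : Fin D, Γ q s (idx k.castSucc) (idx (Fin.last r)) *
          T q (Function.update (fun l => idx l.castSucc) k s)) * ∏ k, v (idx k))]
  simp only [Fin.prod_univ_castSucc, Fin.snoc_castSucc, Fin.snoc_last]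
  simp only [sub_mul, Finset.sum_sub_distrib]
  congr 1
  · refine Finset.sum_congr rfl fun g _ => ?_
    rw [Finset.sum_mul]
    exact Finset.sum_congr rfl fun j _ => by ring
  · -- Γ part
    calc (∑ g : Fin r → Fin D, ∑ j : Fin D,
            (∑ k : Fin r, ∑ s : Fin D, Γ q s (g k) j * T q (Function.update g k s)) *
              ((∏ k, v (g k)) * v j))
        = ∑ g : Fin r → Fin D, ∑ j : Fin D, ∑ k : Fin r, ∑ s : Fin D,
            Γ q s (g k) j * T q (Function.update g k s) * ((∏ l, v (g l)) * v j) := by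
          refine Finset.sum_congr rfl fun g _ => Finset.sum_congr rfl fun j _ => ?_
          rw [Finset.sum_mul]
          exact Finset.sum_congr rfl fun k _ => by rw [Finset.sum_mul]
      _ = ∑ g : Fin r → Fin D, ∑ k : Fin r, ∑ j : Fin D, ∑ s : Fin D,
            Γ q s (g k) j * T q (Function.update g k s) * ((∏ l, v (g l)) * v j) :=
          Finset.sum_congr rfl fun g _ => Finset.sum_comm
      _ = ∑ k : Fin r, ∑ g : Fin r → Fin D, ∑ j : Fin D, ∑ s : Fin D,
            Γ q s (g k) j * T q (Function.update g k s) * ((∏ l, v (g l)) * v j) :=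
          Finset.sum_comm
      _ = ∑ k : Fin r, ∑ g : Fin r → Fin D, ∑ s : Fin D, ∑ j : Fin D,
            Γ q s (g k) j * T q (Function.update g k s) * ((∏ l, v (g l)) * v j) :=
          Finset.sum_congr rfl fun k _ => Finset.sum_congr rfl fun g _ => Finset.sum_comm
      _ = ∑ k : Fin r, ∑ p : (Fin r → Fin D) × Fin D, ∑ j,
            Γ q p.2 (p.1 k) j * T q (Function.update p.1 k p.2) * ((∏ l, v (p.1 l)) * v j) :=
          Finset.sum_congr rfl fun k _ => (Fintype.sum_prod_type (f := fun p : (Fin r → Fin D) × Fin D => ∑ j, Γ q p.2 (p.1 k) j * T q (Function.update p.1 k p.2) * ((∏ l, v (p.1 l)) * v j))).symm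
      _ = ∑ k : Fin r, ∑ g : Fin r → Fin D, T q g *
            ((∑ b, ∑ c, Γ q (g k) b c * v b * v c) * ∏ l ∈ Finset.univ.erase k, v (g l)) := by
          exact Finset.sum_congr rfl fun k _ => per2 Γ T q v k
      _ = ∑ idx : Fin r → Fin D, T q idx *
            ∑ k : Fin r, (∑ b, ∑ c, Γ q (idx k) b c * v b * v c) *
              ∏ l ∈ Finset.univ.erase k, v (idx l) := by
          rw [Finset.sum_comm (s := (Finset.univ : Finset (Fin r)))
            (t := (Finset.univ : Finset (Fin r → Fin D)))]
          exact Finset.sum_congr rfl fun g _ => by rw [Finset.mul_sum]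
lemma hasDerivAt_comp_q {q v : ℝ → Vec D} {t : ℝ}
    (hq : ∀ a, HasDerivAt (fun τ => q τ a) (v t a) t)
    (F : Vec D → ℝ) (hF : ContDiff ℝ (⊤ : ℕ∞) F) :
    HasDerivAt (fun τ => F (q τ)) (∑ j, v t j * pd j F (q t)) t := by
  have hq' : HasDerivAt q (v t) t := hasDerivAt_pi.2 hq
  have hFd : HasFDerivAt F (fderiv ℝ F (q t)) (q t) :=
    (hF.differentiable (by simp) (q t)).hasFDerivAt
  have h := hFd.comp_hasDerivAt t hq'
  refine h.congr_deriv ?_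
  have hv : (v t) = ∑ j, (v t j) • (Pi.single j (1 : ℝ) : Vec D) := by
    funext a
    rw [Finset.sum_apply]
    simp [Pi.single_apply]
  conv_lhs => rw [hv, map_sum]
  refine Finset.sum_congr rfl fun j _ => ?_
  rw [map_smul, smul_eq_mul, pd]

lemma hasDerivAt_ctr {r : ℕ} (Γ : Conn D) (Q : Vec D → Fin D → ℝ) {q v : ℝ → Vec D} {t : ℝ}
    (hq : ∀ a, HasDerivAt (fun τ => q τ a) (v t a) t)
    (hv : ∀ a, HasDerivAt (fun τ => v τ a)
      (-(∑ b, ∑ c, Γ (q t) a b c * v t b * v t c) - Q (q t) a) t)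
    (T : Tens D r) (hT : SmoothTens T) :
    HasDerivAt (fun τ => ctr T (q τ) (v τ))
      (ctr (covTens Γ T) (q t) (v t)
        - ∑ idx : Fin r → Fin D, T (q t) idx *
            ∑ k : Fin r, Q (q t) (idx k) * ∏ l ∈ Finset.univ.erase k, v t (idx l)) t := by
  have raw : HasDerivAt (fun τ => ctr T (q τ) (v τ))
      (∑ idx : Fin r → Fin D,
        ((∑ j, v t j * pd j (fun p => T p idx) (q t)) * ∏ k, v t (idx k)
          + T (q t) idx * ∑ k : Fin r, (∏ l ∈ Finset.univ.erase k, v t (idx l)) •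
              (-(∑ b, ∑ c, Γ (q t) (idx k) b c * v t b * v t c) - Q (q t) (idx k)))) t := by
    unfold ctr
    refine HasDerivAt.fun_sum fun idx _ => ?_
    have h1 : HasDerivAt (fun τ => T (q τ) idx)
        (∑ j, v t j * pd j (fun p => T p idx) (q t)) t :=
      hasDerivAt_comp_q hq _ (hT idx)
    have h2 : HasDerivAt (fun τ => ∏ k : Fin r, v τ (idx k))
        (∑ k : Fin r, (∏ l ∈ Finset.univ.erase k, v t (idx l)) •
          (-(∑ b, ∑ c, Γ (q t) (idx k) b c * v t b * v t c) - Q (q t) (idx k))) t :=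
      HasDerivAt.fun_finset_prod (fun k _ => hv (idx k))
    exact h1.mul h2
  convert raw using 1
  rw [ctr_covTens]
  rw [Finset.sum_add_distrib, sub_sub, ← Finset.sum_add_distrib, sub_eq_add_neg]
  congr 1
  rw [← Finset.sum_neg_distrib]
  refine Finset.sum_congr rfl fun idx _ => ?_
  rw [Finset.mul_sum, Finset.mul_sum, Finset.mul_sum, ← Finset.sum_add_distrib,
    ← Finset.sum_neg_distrib]
  refine Finset.sum_congr rfl fun k _ => ?_
  rw [smul_eq_mul]
  ring

lemma contDiff_dotQ (Q : Vec D → Fin D → ℝ) (hQ : ∀ a, ContDiff ℝ (⊤ : ℕ∞) fun p => Q p a)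
    (T : Tens D 1) (hT : SmoothTens T) : ContDiff ℝ (⊤ : ℕ∞) (dotQ T Q) := by
  unfold dotQ
  exact ContDiff.sum fun c _ => (hT _).mul (hQ c)

lemma const_of_hasDerivAt_zero {f : ℝ → ℝ} {a b : ℝ}
    (h : ∀ t ∈ Set.Ioo a b, HasDerivAt f 0 t) :
    ∀ t₁ ∈ Set.Ioo a b, ∀ t₂ ∈ Set.Ioo a b, f t₁ = f t₂ := by
  intro t₁ h₁ t₂ h₂
  refine Convex.is_const_of_fderivWithin_eq_zero (convex_Ioo a b)
    (fun x hx => ((h x hx).differentiableAt).differentiableWithinAt) ?_ h₁ h₂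
  intro x hx
  rw [fderivWithin_of_isOpen isOpen_Ioo hx, ((h x hx).hasFDerivAt).fderiv]
  ext y
  simp

lemma range_succ_split (n : ℕ) (g : ℕ → ℝ) :
    ∑ N ∈ Finset.range (n + 1), g N = g 0 + ∑ N ∈ Finset.Icc 1 n, g N := by
  rw [Finset.range_eq_Ico, Finset.sum_eq_sum_Ico_succ_bot (Nat.succ_pos n),
    Nat.succ_eq_add_one, Finset.Ico_add_one_right_eq_Icc]

lemma icc_shift (n : ℕ) (g : ℕ → ℝ) :
    ∑ N ∈ Finset.Icc 1 n, g N = ∑ i ∈ Finset.range n, g (1 + i) := by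
  rw [← Finset.Ico_add_one_right_eq_Icc, Finset.sum_Ico_eq_sum_range]
  simp

lemma algMain (ν ℓ : ℕ) (hν : 1 ≤ ν) (t : ℝ)
    (c S CT : ℕ → ℕ → ℝ) (dG : ℝ) (dQ' : ℕ → ℝ)
    (hCodd : ∀ N ∈ Finset.Icc 1 ℓ, ∀ j ∈ Finset.range ν,
      CT (2*N-1) (2*j+1)
        = ((2*j+3 : ℕ):ℝ) * S (2*N-1) (2*j+3) - 2*(N:ℝ) * c (2*N) (2*j+2))
    (hCev : ∀ N ∈ Finset.range (ℓ+1), ∀ j ∈ Finset.range ν,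
      CT (2*N) (2*j+2)
        = ((2*j+4 : ℕ):ℝ) * S (2*N) (2*j+4) - (2*(N:ℝ)+1) * c (2*N+1) (2*j+3))
    (hdG : dG = 2 * S 0 2 - c 1 1)
    (hdQ : ∀ N ∈ Finset.Icc 1 ℓ,
      dQ' N = 4*(N:ℝ) * S (2*N) 2 - 2*(N:ℝ)*(2*(N:ℝ)+1) * c (2*N+1) 1)
    (hS1 : ∀ M, S M (2*ν+1) = 0) (hS2 : ∀ M, S M (2*ν+2) = 0)
    (hcN : ∀ r, c (2*ℓ+1) r = 0) (hcR : ∀ M, c M (2*ν+1) = 0) :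
    (∑ j ∈ Finset.range ν, ∑ N ∈ Finset.Icc 1 ℓ,
        (((2*N-1 : ℕ):ℝ) * t^(2*N-1-1) * c (2*N-1) (2*j+1)
          + t^(2*N-1) * (CT (2*N-1) (2*j+1) - ((2*j+1 : ℕ):ℝ) * S (2*N-1) (2*j+1))))
      + (∑ j ∈ Finset.range ν, ∑ N ∈ Finset.range (ℓ+1),
        (((2*N : ℕ):ℝ) * t^(2*N-1) * c (2*N) (2*j+2)
          + t^(2*N) * (CT (2*N) (2*j+2) - ((2*j+2 : ℕ):ℝ) * S (2*N) (2*j+2))))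
      + (∑ N ∈ Finset.Icc 1 ℓ,
        (dQ' N * t^(2*N) + S (2*N-1) 1 * (((2*N : ℕ):ℝ) * t^(2*N-1))) / ((2*N : ℕ):ℝ))
      + dG = 0 := by
  -- C-part simplification
  have hC : ∀ N ∈ Finset.Icc 1 ℓ,
      (dQ' N * t^(2*N) + S (2*N-1) 1 * (((2*N : ℕ):ℝ) * t^(2*N-1))) / ((2*N : ℕ):ℝ)
        = 2 * S (2*N) 2 * t^(2*N) - (2*(N:ℝ)+1) * c (2*N+1) 1 * t^(2*N)
          + S (2*N-1) 1 * t^(2*N-1) := by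
    intro N hN
    have hN1 : 1 ≤ N := (Finset.mem_Icc.mp hN).1
    have h2N : ((2*N : ℕ):ℝ) ≠ 0 := by
      push_cast
      have : (1:ℝ) ≤ (N:ℝ) := by exact_mod_cast hN1
      nlinarith
    rw [hdQ N hN]
    field_simp
    push_cast
    ring
  -- A-part per-N simplification
  have hA : ∀ N ∈ Finset.Icc 1 ℓ,
      (∑ j ∈ Finset.range ν,
        (((2*N-1 : ℕ):ℝ) * t^(2*N-1-1) * c (2*N-1) (2*j+1)
          + t^(2*N-1) * (CT (2*N-1) (2*j+1) - ((2*j+1 : ℕ):ℝ) * S (2*N-1) (2*j+1))))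
      = ((2*N-1 : ℕ):ℝ) * t^(2*N-1-1) * (∑ j ∈ Finset.range ν, c (2*N-1) (2*j+1))
        - t^(2*N-1) * S (2*N-1) 1
        - t^(2*N-1) * (2*(N:ℝ)) * ∑ j ∈ Finset.range ν, c (2*N) (2*j+2) := by
    intro N hN
    have run : ∀ j ∈ Finset.range ν,
        (((2*N-1 : ℕ):ℝ) * t^(2*N-1-1) * c (2*N-1) (2*j+1)
          + t^(2*N-1) * (CT (2*N-1) (2*j+1) - ((2*j+1 : ℕ):ℝ) * S (2*N-1) (2*j+1)))
        = ((2*N-1 : ℕ):ℝ) * t^(2*N-1-1) * c (2*N-1) (2*j+1)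
          + ((t^(2*N-1) * (((2*(j+1)+1 : ℕ):ℝ) * S (2*N-1) (2*(j+1)+1))
              - t^(2*N-1) * (((2*j+1 : ℕ):ℝ) * S (2*N-1) (2*j+1)))
            - t^(2*N-1) * (2*(N:ℝ)) * c (2*N) (2*j+2)) := by
      intro j hj
      rw [hCodd N hN j hj]
      have e1 : 2*(j+1)+1 = 2*j+3 := by ring
      rw [e1]
      ring
    rw [Finset.sum_congr rfl run, Finset.sum_add_distrib, Finset.sum_sub_distrib,
      Finset.sum_range_sub
        (f := fun j => t^(2*N-1) * (((2*j+1 : ℕ):ℝ) * S (2*N-1) (2*j+1))),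
      hS1 (2*N-1), ← Finset.mul_sum, ← Finset.mul_sum]
    push_cast
    ring
  -- B-part per-N simplification
  have hB : ∀ N ∈ Finset.range (ℓ+1),
      (∑ j ∈ Finset.range ν,
        (((2*N : ℕ):ℝ) * t^(2*N-1) * c (2*N) (2*j+2)
          + t^(2*N) * (CT (2*N) (2*j+2) - ((2*j+2 : ℕ):ℝ) * S (2*N) (2*j+2))))
      = ((2*N : ℕ):ℝ) * t^(2*N-1) * (∑ j ∈ Finset.range ν, c (2*N) (2*j+2))
        - t^(2*N) * 2 * S (2*N) 2
        - t^(2*N) * (2*(N:ℝ)+1) * ∑ j ∈ Finset.range ν, c (2*N+1) (2*j+3) := by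
    intro N hN
    have run : ∀ j ∈ Finset.range ν,
        (((2*N : ℕ):ℝ) * t^(2*N-1) * c (2*N) (2*j+2)
          + t^(2*N) * (CT (2*N) (2*j+2) - ((2*j+2 : ℕ):ℝ) * S (2*N) (2*j+2)))
        = ((2*N : ℕ):ℝ) * t^(2*N-1) * c (2*N) (2*j+2)
          + ((t^(2*N) * (((2*(j+1)+2 : ℕ):ℝ) * S (2*N) (2*(j+1)+2))
              - t^(2*N) * (((2*j+2 : ℕ):ℝ) * S (2*N) (2*j+2)))
            - t^(2*N) * (2*(N:ℝ)+1) * c (2*N+1) (2*j+3)) := by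
      intro j hj
      rw [hCev N hN j hj]
      have e1 : 2*(j+1)+2 = 2*j+4 := by ring
      rw [e1]
      ring
    rw [Finset.sum_congr rfl run, Finset.sum_add_distrib, Finset.sum_sub_distrib,
      Finset.sum_range_sub
        (f := fun j => t^(2*N) * (((2*j+2 : ℕ):ℝ) * S (2*N) (2*j+2))),
      hS2 (2*N), ← Finset.mul_sum, ← Finset.mul_sum]
    push_cast
    ring
  rw [Finset.sum_comm, Finset.sum_congr rfl hA,
    Finset.sum_comm (s := Finset.range ν) (t := Finset.range (ℓ+1)),
    Finset.sum_congr rfl hB, Finset.sum_congr rfl hC, hdG]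
  -- split all the sums
  simp only [Finset.sum_sub_distrib, Finset.sum_add_distrib]
  -- now pure bookkeeping
  have e1 : ∑ x ∈ Finset.Icc 1 ℓ, t ^ (2 * x - 1) * S (2 * x - 1) 1
      = ∑ x ∈ Finset.Icc 1 ℓ, S (2 * x - 1) 1 * t ^ (2 * x - 1) :=
    Finset.sum_congr rfl fun x _ => by ring
  have e2 : ∑ x ∈ Finset.range (ℓ + 1),
        ((2 * x : ℕ) : ℝ) * t ^ (2 * x - 1) * ∑ j ∈ Finset.range ν, c (2 * x) (2 * j + 2)
      = ∑ x ∈ Finset.Icc 1 ℓ,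
        t ^ (2 * x - 1) * (2 * (x : ℝ)) * ∑ j ∈ Finset.range ν, c (2 * x) (2 * j + 2) := by
    rw [range_succ_split]
    simp only [Nat.mul_zero, Nat.cast_zero, zero_mul, zero_add]
    exact Finset.sum_congr rfl fun x _ => by push_cast; ring
  have e3 : ∑ x ∈ Finset.range (ℓ + 1), t ^ (2 * x) * 2 * S (2 * x) 2
      = 2 * S 0 2 + ∑ x ∈ Finset.Icc 1 ℓ, 2 * S (2 * x) 2 * t ^ (2 * x) := by
    rw [range_succ_split]
    norm_num
    exact Finset.sum_congr rfl fun x _ => by ring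
  have e4 : (∑ x ∈ Finset.range (ℓ + 1),
        t ^ (2 * x) * (2 * (x : ℝ) + 1) * ∑ j ∈ Finset.range ν, c (2 * x + 1) (2 * j + 3))
      + (∑ x ∈ Finset.Icc 1 ℓ, (2 * (x : ℝ) + 1) * c (2 * x + 1) 1 * t ^ (2 * x))
      + c 1 1
      = ∑ x ∈ Finset.Icc 1 ℓ,
          ((2 * x - 1 : ℕ) : ℝ) * t ^ (2 * x - 1 - 1) *
            ∑ j ∈ Finset.range ν, c (2 * x - 1) (2 * j + 1) := by
    have hP8 : (∑ x ∈ Finset.Icc 1 ℓ, (2 * (x : ℝ) + 1) * c (2 * x + 1) 1 * t ^ (2 * x)) + c 1 1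
        = ∑ x ∈ Finset.range (ℓ + 1), (2 * (x : ℝ) + 1) * c (2 * x + 1) 1 * t ^ (2 * x) := by
      rw [range_succ_split]
      norm_num
      ring
    rw [add_assoc, hP8, ← Finset.sum_add_distrib]
    have inner : ∀ x : ℕ,
        t ^ (2 * x) * (2 * (x : ℝ) + 1) * (∑ j ∈ Finset.range ν, c (2 * x + 1) (2 * j + 3))
          + (2 * (x : ℝ) + 1) * c (2 * x + 1) 1 * t ^ (2 * x)
        = t ^ (2 * x) * (2 * (x : ℝ) + 1) * ∑ j ∈ Finset.range ν, c (2 * x + 1) (2 * j + 1) := by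
      intro x
      have h1 := Finset.sum_range_succ' (fun j => c (2 * x + 1) (2 * j + 1)) ν
      have h2 := Finset.sum_range_succ (fun j => c (2 * x + 1) (2 * j + 1)) ν
      have h3 : ∀ j : ℕ, c (2 * x + 1) (2 * (j + 1) + 1) = c (2 * x + 1) (2 * j + 3) := by
        intro j
        have : 2 * (j + 1) + 1 = 2 * j + 3 := by ring
        rw [this]
      simp only [h3] at h1
      have key : (∑ j ∈ Finset.range ν, c (2 * x + 1) (2 * j + 3)) + c (2 * x + 1) 1
          = ∑ j ∈ Finset.range ν, c (2 * x + 1) (2 * j + 1) := by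
        have : c (2 * x + 1) (2 * 0 + 1) = c (2 * x + 1) 1 := by norm_num
        rw [← this, ← h1, h2, hcR (2 * x + 1), add_zero]
      calc t ^ (2 * x) * (2 * (x : ℝ) + 1) * (∑ j ∈ Finset.range ν, c (2 * x + 1) (2 * j + 3))
            + (2 * (x : ℝ) + 1) * c (2 * x + 1) 1 * t ^ (2 * x)
          = t ^ (2 * x) * (2 * (x : ℝ) + 1) *
              ((∑ j ∈ Finset.range ν, c (2 * x + 1) (2 * j + 3)) + c (2 * x + 1) 1) := by ring
        _ = _ := by rw [key]
    rw [Finset.sum_congr rfl fun x _ => inner x]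
    -- now shift the RHS
    rw [icc_shift]
    have h4 : ∀ i : ℕ,
        ((2 * (1 + i) - 1 : ℕ) : ℝ) * t ^ (2 * (1 + i) - 1 - 1) *
            (∑ j ∈ Finset.range ν, c (2 * (1 + i) - 1) (2 * j + 1))
        = t ^ (2 * i) * (2 * (i : ℝ) + 1) * ∑ j ∈ Finset.range ν, c (2 * i + 1) (2 * j + 1) := by
      intro i
      have ha : 2 * (1 + i) - 1 = 2 * i + 1 := by omega
      have hb : 2 * i + 1 - 1 = 2 * i := by omega
      rw [ha, hb]
      push_cast
      ring
    rw [Finset.sum_congr rfl fun i _ => h4 i, Finset.sum_range_succ]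
    have hzero : ∑ j ∈ Finset.range ν, c (2 * ℓ + 1) (2 * j + 1) = 0 :=
      Finset.sum_eq_zero fun j _ => hcN _
    rw [hzero]
    ring
  linarith [e1, e2, e3, e4]
lemma ctr_eq_zero {r : ℕ} (T : Tens D r) (h : T = fun _ _ => 0) (P V : Vec D) :
    ctr T P V = 0 := by
  rw [h]; unfold ctr; simp

lemma qsv_eq_zero {r : ℕ} (Q : Vec D → Fin D → ℝ) (T : Tens D (r + 1))
    (h : T = fun _ _ => 0) (P V : Vec D) : qsv Q T P V = 0 := by
  rw [h]; unfold qsv; simp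

lemma contract_rhs {r : ℕ} (Q : Vec D → Fin D → ℝ) (P V : Vec D) (κ μ : ℝ)
    (X : Tens D (r + 1)) (W : Tens D (r + 2)) (Y : Tens D (r + 1))
    (h : ∀ idx : Fin (r + 1) → Fin D, X P idx =
        κ * (∑ c, W P (Fin.snoc idx c) * Q P c) - μ * Y P idx) :
    ctr X P V = κ * qsv Q W P V - μ * ctr Y P V := by
  unfold ctr qsv
  simp_rw [h, sub_mul, mul_assoc]
  rw [Finset.sum_sub_distrib, ← Finset.mul_sum, ← Finset.mul_sum]

lemma ctr_one (T : Tens D 1) (P V : Vec D) :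
    ctr T P V = ∑ i, T P (fun _ => i) * V i := by
  unfold ctr
  rw [← Equiv.sum_comp (Equiv.funUnique (Fin 1) (Fin D)).symm]
  refine Finset.sum_congr rfl fun i _ => ?_
  congr 1
  exact Fin.prod_univ_one _

lemma snoc_pair (i c : Fin D) : (Fin.snoc (fun _ => i) c : Fin 2 → Fin D) = ![i, c] := by
  funext k
  fin_cases k <;> simp [Fin.snoc]

lemma qsv_one (Q : Vec D → Fin D → ℝ) (T : Tens D 2) (P V : Vec D) :
    qsv Q T P V = ∑ i, (∑ c, T P ![i, c] * Q P c) * V i := by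
  unfold qsv
  rw [← Equiv.sum_comp (Equiv.funUnique (Fin 1) (Fin D)).symm]
  refine Finset.sum_congr rfl fun i _ => ?_
  congr 1
  · refine Finset.sum_congr rfl fun c _ => ?_
    congr 2
    exact snoc_pair i c
  · exact Fin.prod_univ_one _

lemma snoc_zero (c : Fin D) :
    (Fin.snoc (default : Fin 0 → Fin D) c : Fin 1 → Fin D) = fun _ => c := by
  funext k
  fin_cases k <;> simp [Fin.snoc]

lemma qsv_dotQ (Q : Vec D → Fin D → ℝ) (T : Tens D 1) (P V : Vec D) :
    qsv (r := 0) Q T P V = dotQ T Q P := by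
  unfold qsv dotQ
  rw [Fintype.sum_unique]
  simp only [snoc_zero]
  simp

lemma contract_rank1 (Q : Vec D → Fin D → ℝ) (P V : Vec D) (κ μ : ℝ)
    (A : Tens D 2) (Bt : Tens D 1) (f : Fin D → ℝ)
    (h : ∀ i, f i = κ * (∑ c, A P ![i, c] * Q P c) - μ * Bt P (fun _ => i)) :
    ∑ i, V i * f i = κ * qsv Q A P V - μ * ctr Bt P V := by
  rw [qsv_one, ctr_one, Finset.mul_sum, Finset.mul_sum, ← Finset.sum_sub_distrib]
  refine Finset.sum_congr rfl fun i _ => ?_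
  rw [h i]
  ring

/-- complete form `J^{(2ν,1)}_ℓ`, even order `m = 2ν`.
`L N r` represents `L_{(N)i₁...i_r}`.  The admissible components are
`L_{(2N−1)}` at odd ranks `r ∈ {1,…,2ν−1}` with `1 ≤ N ≤ ℓ` and `L_{(2N)}` at
even ranks `r ∈ {2,…,2ν}` with `0 ≤ N ≤ ℓ`; all other components are absent,
i.e. vanish, which encodes the "present only if" conventions. -/
theorem stmt7 {D : ℕ} (ν ℓ : ℕ) (hν : 1 ≤ ν)
    (Γ : Conn D) (Q : Vec D → Fin D → ℝ)
    (hΓsym : ∀ q a b c, Γ q a b c = Γ q a c b)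
    (hΓ : ∀ a b c, ContDiff ℝ (⊤ : ℕ∞) fun q => Γ q a b c)
    (hQ : ∀ a, ContDiff ℝ (⊤ : ℕ∞) fun q => Q q a)
    (L : ℕ → (r : ℕ) → Tens D r) (G : Vec D → ℝ)
    (hLsm : ∀ N r, SmoothTens (L N r))
    (hLsym : ∀ N r, IsSymTens (L N r))
    (hG : ContDiff ℝ (⊤ : ℕ∞) G)
    (hL0 : ∀ N r, r = 0 ∨ 2 * ν < r ∨ 2 * ℓ < N ∨ N % 2 ≠ r % 2 →
      L N r = fun _ _ => 0)
    -- (i) `L_{(0)i₁...i_{2ν}}` is a (2ν)-th order generalized KT, and for `N = 1,…,ℓ`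
    -- `L_{(2N)i₁...i_{2ν}} = −(1/(2N)) L_{(2N−1)(i₁...i_{2ν−1}|i_{2ν})}` are (2ν)-th order KTs
    (hKT0 : IsGenKT Γ (L 0 (2 * ν)))
    (hrec : ∀ ν₀, ν = ν₀ + 1 → ∀ N, 1 ≤ N → N ≤ ℓ →
      (∀ q (idx : Fin (2 * ν₀ + 2) → Fin D),
        L (2 * N) (2 * ν₀ + 2) q idx =
          -(1 / (2 * (N : ℝ))) * symT (covTens Γ (L (2 * N - 1) (2 * ν₀ + 1))) q idx) ∧
      IsGenKT Γ (L (2 * N) (2 * ν₀ + 2)))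
    -- (ii) `G_{,i₁} = 2 L_{(0)i₁i₂} Q^{i₂} − L_{(1)i₁}` (the last term only if `ℓ > 0`)
    (hGc : ∀ q (i : Fin D),
      pd i G q = 2 * (∑ j, L 0 2 q ![i, j] * Q q j) - L 1 1 q fun _ => i)
    -- (iii) `(L_{(2N−1)c}Q^c)_{,i₁} = 4N L_{(2N)i₁i₂}Q^{i₂} − 2N(2N+1) L_{(2N+1)i₁}`
    (hc1 : ∀ N, 1 ≤ N → N ≤ ℓ → ∀ q (i : Fin D),
      pd i (dotQ (L (2 * N - 1) 1) Q) q =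
        4 * (N : ℝ) * (∑ j, L (2 * N) 2 q ![i, j] * Q q j)
          - 2 * (N : ℝ) * (2 * (N : ℝ) + 1) * L (2 * N + 1) 1 q fun _ => i)
    -- (iv) for even ranks `r = 2i+2 ∈ {2,…,2ν−2}` and `N = 1,…,ℓ`
    (hc2 : ∀ N, 1 ≤ N → N ≤ ℓ → ∀ i : ℕ, 2 * i + 4 ≤ 2 * ν →
      ∀ q (idx : Fin (2 * i + 2) → Fin D),
        symT (covTens Γ (L (2 * N - 1) (2 * i + 1))) q idx =
          ((2 * i + 3 : ℕ) : ℝ) * (∑ j, L (2 * N - 1) (2 * i + 3) q (Fin.snoc idx j) * Q q j)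
            - 2 * (N : ℝ) * L (2 * N) (2 * i + 2) q idx)
    -- (v) for odd ranks `r = 2i+3 ∈ {3,…,2ν−1}` and `N = 0,…,ℓ`
    (hc3 : ∀ N, N ≤ ℓ → ∀ i : ℕ, 2 * i + 4 ≤ 2 * ν →
      ∀ q (idx : Fin (2 * i + 3) → Fin D),
        symT (covTens Γ (L (2 * N) (2 * i + 2))) q idx =
          ((2 * i + 4 : ℕ) : ℝ) * (∑ j, L (2 * N) (2 * i + 4) q (Fin.snoc idx j) * Q q j)
            - (2 * (N : ℝ) + 1) * L (2 * N + 1) (2 * i + 3) q idx) :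
    FirstIntegral Γ Q (fun t q v =>
      (∑ j ∈ Finset.range ν, ∑ idx : Fin (2 * j + 1) → Fin D,
        (∑ N ∈ Finset.Icc 1 ℓ, t ^ (2 * N - 1) * L (2 * N - 1) (2 * j + 1) q idx) *
          ∏ k : Fin (2 * j + 1), v (idx k))
      + (∑ j ∈ Finset.range ν, ∑ idx : Fin (2 * j + 2) → Fin D,
        (∑ N ∈ Finset.range (ℓ + 1), t ^ (2 * N) * L (2 * N) (2 * j + 2) q idx) *
          ∏ k : Fin (2 * j + 2), v (idx k))
      + (∑ N ∈ Finset.Icc 1 ℓ, dotQ (L (2 * N - 1) 1) Q q * t ^ (2 * N) / ((2 * N : ℕ) : ℝ))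
      + G q) := by

  intro a b q v hsol
  have key : ∀ t ∈ Set.Ioo a b, HasDerivAt (fun τ =>
      (∑ j ∈ Finset.range ν, ∑ idx : Fin (2 * j + 1) → Fin D,
        (∑ N ∈ Finset.Icc 1 ℓ, τ ^ (2 * N - 1) * L (2 * N - 1) (2 * j + 1) (q τ) idx) *
          ∏ k : Fin (2 * j + 1), v τ (idx k))
      + (∑ j ∈ Finset.range ν, ∑ idx : Fin (2 * j + 2) → Fin D,
        (∑ N ∈ Finset.range (ℓ + 1), τ ^ (2 * N) * L (2 * N) (2 * j + 2) (q τ) idx) *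
          ∏ k : Fin (2 * j + 2), v τ (idx k))
      + (∑ N ∈ Finset.Icc 1 ℓ, dotQ (L (2 * N - 1) 1) Q (q τ) * τ ^ (2 * N) / ((2 * N : ℕ) : ℝ))
      + G (q τ)) 0 t := by
    intro t ht
    have hq : ∀ i, HasDerivAt (fun τ => q τ i) (v t i) t := fun i => (hsol t ht i).1
    have hv : ∀ i, HasDerivAt (fun τ => v τ i)
        (-(∑ b', ∑ c', Γ (q t) i b' c' * v t b' * v t c') - Q (q t) i) t :=
      fun i => (hsol t ht i).2
    have swap : ∀ (r : ℕ) (Sf : Finset ℕ) (co : ℕ → ℝ) (M : ℕ → ℕ) (P V : Vec D),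
        (∑ idx : Fin r → Fin D, (∑ N ∈ Sf, co N * L (M N) r P idx) * ∏ k, V (idx k))
          = ∑ N ∈ Sf, co N * ctr (L (M N) r) P V := by
      intro r Sf co M P V
      unfold ctr
      simp_rw [Finset.sum_mul]
      rw [Finset.sum_comm]
      simp_rw [mul_assoc, ← Finset.mul_sum]
    have hfe : (fun τ =>
        (∑ j ∈ Finset.range ν, ∑ idx : Fin (2 * j + 1) → Fin D,
          (∑ N ∈ Finset.Icc 1 ℓ, τ ^ (2 * N - 1) * L (2 * N - 1) (2 * j + 1) (q τ) idx) *
            ∏ k : Fin (2 * j + 1), v τ (idx k))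
        + (∑ j ∈ Finset.range ν, ∑ idx : Fin (2 * j + 2) → Fin D,
          (∑ N ∈ Finset.range (ℓ + 1), τ ^ (2 * N) * L (2 * N) (2 * j + 2) (q τ) idx) *
            ∏ k : Fin (2 * j + 2), v τ (idx k))
        + (∑ N ∈ Finset.Icc 1 ℓ, dotQ (L (2 * N - 1) 1) Q (q τ) * τ ^ (2 * N) / ((2 * N : ℕ) : ℝ))
        + G (q τ))
      = (fun τ =>
        (∑ j ∈ Finset.range ν, ∑ N ∈ Finset.Icc 1 ℓ,
          τ ^ (2 * N - 1) * ctr (L (2 * N - 1) (2 * j + 1)) (q τ) (v τ))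
        + (∑ j ∈ Finset.range ν, ∑ N ∈ Finset.range (ℓ + 1),
          τ ^ (2 * N) * ctr (L (2 * N) (2 * j + 2)) (q τ) (v τ))
        + (∑ N ∈ Finset.Icc 1 ℓ, dotQ (L (2 * N - 1) 1) Q (q τ) * τ ^ (2 * N) / ((2 * N : ℕ) : ℝ))
        + G (q τ)) := by
      funext τ
      congr 1
      congr 1
      congr 1
      · exact Finset.sum_congr rfl fun j _ =>
          swap (2 * j + 1) (Finset.Icc 1 ℓ) (fun N => τ ^ (2 * N - 1))
            (fun N => 2 * N - 1) (q τ) (v τ)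
      · exact Finset.sum_congr rfl fun j _ =>
          swap (2 * j + 2) (Finset.range (ℓ + 1)) (fun N => τ ^ (2 * N))
            (fun N => 2 * N) (q τ) (v τ)
    rw [hfe]
    have hA : HasDerivAt (fun τ => ∑ j ∈ Finset.range ν, ∑ N ∈ Finset.Icc 1 ℓ,
          τ ^ (2 * N - 1) * ctr (L (2 * N - 1) (2 * j + 1)) (q τ) (v τ))
        (∑ j ∈ Finset.range ν, ∑ N ∈ Finset.Icc 1 ℓ,
          (((2 * N - 1 : ℕ) : ℝ) * t ^ (2 * N - 1 - 1) * ctr (L (2 * N - 1) (2 * j + 1)) (q t) (v t)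
            + t ^ (2 * N - 1) * (ctr (covTens Γ (L (2 * N - 1) (2 * j + 1))) (q t) (v t)
              - ∑ idx : Fin (2 * j + 1) → Fin D, L (2 * N - 1) (2 * j + 1) (q t) idx *
                  ∑ k, Q (q t) (idx k) * ∏ l ∈ Finset.univ.erase k, v t (idx l)))) t :=
      HasDerivAt.fun_sum fun j _ => HasDerivAt.fun_sum fun N _ =>
        (hasDerivAt_pow (2 * N - 1) t).mul (hasDerivAt_ctr Γ Q hq hv _ (hLsm _ _))
    have hB : HasDerivAt (fun τ => ∑ j ∈ Finset.range ν, ∑ N ∈ Finset.range (ℓ + 1),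
          τ ^ (2 * N) * ctr (L (2 * N) (2 * j + 2)) (q τ) (v τ))
        (∑ j ∈ Finset.range ν, ∑ N ∈ Finset.range (ℓ + 1),
          (((2 * N : ℕ) : ℝ) * t ^ (2 * N - 1) * ctr (L (2 * N) (2 * j + 2)) (q t) (v t)
            + t ^ (2 * N) * (ctr (covTens Γ (L (2 * N) (2 * j + 2))) (q t) (v t)
              - ∑ idx : Fin (2 * j + 2) → Fin D, L (2 * N) (2 * j + 2) (q t) idx *
                  ∑ k, Q (q t) (idx k) * ∏ l ∈ Finset.univ.erase k, v t (idx l)))) t :=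
      HasDerivAt.fun_sum fun j _ => HasDerivAt.fun_sum fun N _ =>
        (hasDerivAt_pow (2 * N) t).mul (hasDerivAt_ctr Γ Q hq hv _ (hLsm _ _))
    have hCd : HasDerivAt (fun τ => ∑ N ∈ Finset.Icc 1 ℓ,
          dotQ (L (2 * N - 1) 1) Q (q τ) * τ ^ (2 * N) / ((2 * N : ℕ) : ℝ))
        (∑ N ∈ Finset.Icc 1 ℓ,
          ((∑ i, v t i * pd i (dotQ (L (2 * N - 1) 1) Q) (q t)) * t ^ (2 * N)
            + dotQ (L (2 * N - 1) 1) Q (q t) * (((2 * N : ℕ) : ℝ) * t ^ (2 * N - 1)))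
              / ((2 * N : ℕ) : ℝ)) t :=
      HasDerivAt.fun_sum fun N _ =>
        ((hasDerivAt_comp_q hq _ (contDiff_dotQ Q hQ _ (hLsm _ _))).mul
          (hasDerivAt_pow (2 * N) t)).div_const _
    have hGd : HasDerivAt (fun τ => G (q τ)) (∑ i, v t i * pd i G (q t)) t :=
      hasDerivAt_comp_q hq G hG
    have total := ((hA.add hB).add hCd).add hGd
    refine total.congr_deriv (Eq.symm ?_)
    symm
    have h2Nne : ∀ N : ℕ, 1 ≤ N → (2 * (N : ℝ)) ≠ 0 := by
      intro N hN1
      have h1 : (1 : ℝ) ≤ (N : ℝ) := by exact_mod_cast hN1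
      nlinarith
    have hCodd : ∀ N ∈ Finset.Icc 1 ℓ, ∀ j ∈ Finset.range ν,
        ctr (covTens Γ (L (2 * N - 1) (2 * j + 1))) (q t) (v t)
          = ((2 * j + 3 : ℕ) : ℝ) * qsv Q (L (2 * N - 1) (2 * j + 3)) (q t) (v t)
            - 2 * (N : ℝ) * ctr (L (2 * N) (2 * j + 2)) (q t) (v t) := by
      intro N hN j hj
      obtain ⟨hN1, hN2⟩ := Finset.mem_Icc.mp hN
      have hjν := Finset.mem_range.mp hj
      rw [← ctr_symT (covTens Γ (L (2 * N - 1) (2 * j + 1))) (q t) (v t)]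
      by_cases hcase : 2 * j + 4 ≤ 2 * ν
      · exact contract_rhs Q (q t) (v t) _ _ _ (L (2 * N - 1) (2 * j + 3))
          (L (2 * N) (2 * j + 2)) (fun idx => hc2 N hN1 hN2 j hcase (q t) idx)
      · have hν2 : ν = j + 1 := by omega
        obtain ⟨heq, -⟩ := hrec j hν2 N hN1 hN2
        have hzero3 : L (2 * N - 1) (2 * j + 3) = fun _ _ => 0 :=
          hL0 _ _ (by right; left; omega)
        refine contract_rhs Q (q t) (v t) _ _ _ (L (2 * N - 1) (2 * j + 3))
          (L (2 * N) (2 * j + 2)) (fun idx => ?_)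
        have h2N : 2 * (N : ℝ) ≠ 0 := h2Nne N hN1
        rw [heq (q t) idx, hzero3]
        simp only [zero_mul, Finset.sum_const_zero, mul_zero, zero_sub]
        field_simp
    have hCev : ∀ N ∈ Finset.range (ℓ + 1), ∀ j ∈ Finset.range ν,
        ctr (covTens Γ (L (2 * N) (2 * j + 2))) (q t) (v t)
          = ((2 * j + 4 : ℕ) : ℝ) * qsv Q (L (2 * N) (2 * j + 4)) (q t) (v t)
            - (2 * (N : ℝ) + 1) * ctr (L (2 * N + 1) (2 * j + 3)) (q t) (v t) := by
      intro N hN j hj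
      have hNℓ : N ≤ ℓ := by have := Finset.mem_range.mp hN; omega
      have hjν := Finset.mem_range.mp hj
      rw [← ctr_symT (covTens Γ (L (2 * N) (2 * j + 2))) (q t) (v t)]
      by_cases hcase : 2 * j + 4 ≤ 2 * ν
      · exact contract_rhs Q (q t) (v t) _ _ _ (L (2 * N) (2 * j + 4))
          (L (2 * N + 1) (2 * j + 3)) (fun idx => hc3 N hNℓ j hcase (q t) idx)
      · have hν2 : ν = j + 1 := by omega
        have hKT : IsGenKT Γ (L (2 * N) (2 * j + 2)) := by
          rcases Nat.eq_zero_or_pos N with h0 | h1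
          · subst h0
            have h2ν : 2 * ν = 2 * j + 2 := by omega
            rw [h2ν] at hKT0
            simpa using hKT0
          · exact (hrec j hν2 N h1 hNℓ).2
        have h1 : ctr (symT (covTens Γ (L (2 * N) (2 * j + 2)))) (q t) (v t) = 0 := by
          unfold ctr
          exact Finset.sum_eq_zero fun idx _ => by rw [hKT (q t) idx, zero_mul]
        have h2 : qsv Q (L (2 * N) (2 * j + 4)) (q t) (v t) = 0 :=
          qsv_eq_zero Q _ (hL0 _ _ (by right; left; omega)) _ _
        have h3 : ctr (L (2 * N + 1) (2 * j + 3)) (q t) (v t) = 0 :=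
          ctr_eq_zero _ (hL0 _ _ (by right; left; omega)) _ _
        rw [h1, h2, h3]
        ring
    have hdG' : (∑ i, v t i * pd i G (q t))
        = 2 * qsv Q (L 0 2) (q t) (v t) - ctr (L 1 1) (q t) (v t) := by
      have h := contract_rank1 Q (q t) (v t) 2 1 (L 0 2) (L 1 1)
        (fun i => pd i G (q t)) (fun i => by show pd i G (q t) = _; rw [hGc (q t) i]; ring)
      simpa using h
    have hdQ' : ∀ N ∈ Finset.Icc 1 ℓ,
        (∑ i, v t i * pd i (dotQ (L (2 * N - 1) 1) Q) (q t))
          = 4 * (N : ℝ) * qsv Q (L (2 * N) 2) (q t) (v t)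
            - 2 * (N : ℝ) * (2 * (N : ℝ) + 1) * ctr (L (2 * N + 1) 1) (q t) (v t) := by
      intro N hN
      obtain ⟨hN1, hN2⟩ := Finset.mem_Icc.mp hN
      exact contract_rank1 Q (q t) (v t) (4 * (N : ℝ)) (2 * (N : ℝ) * (2 * (N : ℝ) + 1))
        (L (2 * N) 2) (L (2 * N + 1) 1)
        (fun i => pd i (dotQ (L (2 * N - 1) 1) Q) (q t))
        (fun i => hc1 N hN1 hN2 (q t) i)
    have hS1' : ∀ M, qsv Q (L M (2 * ν + 1)) (q t) (v t) = 0 :=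
      fun M => qsv_eq_zero Q _ (hL0 _ _ (by right; left; omega)) _ _
    have hS2' : ∀ M, qsv Q (L M (2 * ν + 2)) (q t) (v t) = 0 :=
      fun M => qsv_eq_zero Q _ (hL0 _ _ (by right; left; omega)) _ _
    have hcN' : ∀ r, ctr (L (2 * ℓ + 1) r) (q t) (v t) = 0 :=
      fun r => ctr_eq_zero _ (hL0 _ _ (by right; right; left; omega)) _ _
    have hcR' : ∀ M, ctr (L M (2 * ν + 1)) (q t) (v t) = 0 :=
      fun M => ctr_eq_zero _ (hL0 _ _ (by right; left; omega)) _ _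
    have final := algMain ν ℓ hν t
      (fun M r => ctr (L M r) (q t) (v t))
      (fun M r => match r with
        | 0 => (0 : ℝ)
        | (r' + 1) => qsv Q (L M (r' + 1)) (q t) (v t))
      (fun M r => ctr (covTens Γ (L M r)) (q t) (v t))
      (∑ i, v t i * pd i G (q t))
      (fun N => ∑ i, v t i * pd i (dotQ (L (2 * N - 1) 1) Q) (q t))
      hCodd hCev hdG' hdQ' hS1' hS2' hcN' hcR'
    refine Eq.trans ?_ final
    congr 1
    congr 1
    congr 1
    · refine Finset.sum_congr rfl fun j _ => Finset.sum_congr rfl fun N _ => ?_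
      rw [qt_eq Q (L (2 * N - 1) (2 * j + 1)) (hLsym _ _) (q t) (v t)]
    · refine Finset.sum_congr rfl fun j _ => Finset.sum_congr rfl fun N _ => ?_
      rw [qt_eq Q (L (2 * N) (2 * j + 2)) (hLsym _ _) (q t) (v t)]
    · refine Finset.sum_congr rfl fun N _ => ?_
      rw [← qsv_dotQ Q (L (2 * N - 1) 1) (q t) (v t)]

  exact const_of_hasDerivAt_zero key
end AuxLemmas
end
end

section
/- (Proposition on Riemannian connections, case 4.) Let I₁, I₂ ⊆ ℝ be open intervals, f : I₁ → ℝ and h : I₂ → ℝ smooth with f(x) > 0 and h(y) > 0, and let c₀ ∈ ℝ with c₀ ≠ 1 and c₀ ≠ −1. Consider the symmetric connection on U = I₁ × I₂ whose only nonzero coefficients are Γ¹₁₁ = f'(x)/(2f(x)) and Γ²₂₂ = h'(y)/(2h(y)). Then the symmetric matrix field γ_{ab} = [[f(x), c₀√(f(x)h(y))],[c₀√(f(x)h(y)), h(y)]] is covariantly constant with respect to this connection and satisfies det[γ_{ab}] = (1 − c₀²) f(x)h(y) ≠ 0 on U; hence the connection is Riemannian with kinetic metric γ_{ab}. -/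
noncomputable section
open scoped BigOperators

/-- Partial derivative `∂f/∂x` on `ℝ²`. -/
def pdx (f : ℝ × ℝ → ℝ) (z : ℝ × ℝ) : ℝ := fderiv ℝ f z (1, 0)

/-- Partial derivative `∂f/∂y` on `ℝ²`. -/
def pdy (f : ℝ × ℝ → ℝ) (z : ℝ × ℝ) : ℝ := fderiv ℝ f z (0, 1)

lemma hasF_fst (f : ℝ → ℝ) (z : ℝ × ℝ) (hdf : DifferentiableAt ℝ f z.1) :
    HasFDerivAt (fun w : ℝ × ℝ => f w.1)
      ((ContinuousLinearMap.smulRight (1 : ℝ →L[ℝ] ℝ) (deriv f z.1)).comp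
        (ContinuousLinearMap.fst ℝ ℝ ℝ)) z :=
  hdf.hasDerivAt.hasFDerivAt.comp z hasFDerivAt_fst

lemma hasF_snd (h : ℝ → ℝ) (z : ℝ × ℝ) (hdh : DifferentiableAt ℝ h z.2) :
    HasFDerivAt (fun w : ℝ × ℝ => h w.2)
      ((ContinuousLinearMap.smulRight (1 : ℝ →L[ℝ] ℝ) (deriv h z.2)).comp
        (ContinuousLinearMap.snd ℝ ℝ ℝ)) z :=
  hdh.hasDerivAt.hasFDerivAt.comp z hasFDerivAt_snd

lemma pd_fst (f : ℝ → ℝ) (z : ℝ × ℝ) (hdf : DifferentiableAt ℝ f z.1) :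
    pdx (fun w => f w.1) z = deriv f z.1 ∧ pdy (fun w => f w.1) z = 0 := by
  have H := hasF_fst f z hdf
  constructor <;> simp [pdx, pdy, H.fderiv]

lemma pd_snd (h : ℝ → ℝ) (z : ℝ × ℝ) (hdh : DifferentiableAt ℝ h z.2) :
    pdx (fun w => h w.2) z = 0 ∧ pdy (fun w => h w.2) z = deriv h z.2 := by
  have H := hasF_snd h z hdh
  constructor <;> simp [pdx, pdy, H.fderiv]

lemma pd_sqrt (f h : ℝ → ℝ) (c₀ : ℝ) (z : ℝ × ℝ)
    (hdf : DifferentiableAt ℝ f z.1) (hdh : DifferentiableAt ℝ h z.2)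
    (hf0 : 0 < f z.1) (hh0 : 0 < h z.2) :
    pdx (fun w => c₀ * Real.sqrt (f w.1 * h w.2)) z
      = c₀ * Real.sqrt (f z.1 * h z.2) * (deriv f z.1 / (2 * f z.1)) ∧
    pdy (fun w => c₀ * Real.sqrt (f w.1 * h w.2)) z
      = c₀ * Real.sqrt (f z.1 * h z.2) * (deriv h z.2 / (2 * h z.2)) := by
  have hpos : 0 < f z.1 * h z.2 := mul_pos hf0 hh0
  have hu := (hasF_fst f z hdf).mul (hasF_snd h z hdh)
  have hs' := ((Real.hasDerivAt_sqrt (ne_of_gt hpos)).comp_hasFDerivAt z hu).const_mul c₀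
  have hs : HasFDerivAt (fun w => c₀ * Real.sqrt (f w.1 * h w.2))
      (c₀ • (1 / (2 * Real.sqrt (f z.1 * h z.2))) •
        (f z.1 • (ContinuousLinearMap.smulRight 1 (deriv h z.2)).comp (ContinuousLinearMap.snd ℝ ℝ ℝ) +
          h z.2 • (ContinuousLinearMap.smulRight 1 (deriv f z.1)).comp (ContinuousLinearMap.fst ℝ ℝ ℝ))) z := hs'
  have hsq : Real.sqrt (f z.1 * h z.2) * Real.sqrt (f z.1 * h z.2) = f z.1 * h z.2 :=
    Real.mul_self_sqrt hpos.le
  have hsne : Real.sqrt (f z.1 * h z.2) ≠ 0 := ne_of_gt (Real.sqrt_pos.mpr hpos)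
  constructor <;>
  · simp only [pdx, pdy, hs.fderiv, ContinuousLinearMap.coe_smul', Pi.smul_apply,
      ContinuousLinearMap.add_apply, ContinuousLinearMap.coe_comp', Function.comp_apply,
      ContinuousLinearMap.smulRight_apply, ContinuousLinearMap.coe_fst',
      ContinuousLinearMap.coe_snd', ContinuousLinearMap.one_apply, smul_eq_mul]
    field_simp
    ring_nf
    rw [Real.sq_sqrt (by nlinarith [mul_pos hf0 hh0])]
    ring


/-- Partial derivative `∂f/∂q^c` on `ℝ²`, `c : Fin 2`. -/
def pd2 (c : Fin 2) (f : ℝ × ℝ → ℝ) (z : ℝ × ℝ) : ℝ :=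
  if c = 0 then pdx f z else pdy f z

/-- The symmetric connection on `ℝ²` whose only (possibly) nonzero
coefficients are `Γ¹₁₁ = G1` and `Γ²₂₂ = G2`. -/
def conn2 (G1 G2 : ℝ × ℝ → ℝ) (z : ℝ × ℝ) (a b c : Fin 2) : ℝ :=
  if a = 0 ∧ b = 0 ∧ c = 0 then G1 z
  else if a = 1 ∧ b = 1 ∧ c = 1 then G2 z else 0

/-- `γ_{ab}` is covariantly constant on `U` with respect to `conn2 G1 G2`:
`γ_{ab,c} − γ_{db}Γ^d_{ac} − γ_{ad}Γ^d_{bc} = 0`. -/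
def CovConstOn (G1 G2 : ℝ × ℝ → ℝ) (γ : ℝ × ℝ → Fin 2 → Fin 2 → ℝ)
    (U : Set (ℝ × ℝ)) : Prop :=
  ∀ z ∈ U, ∀ a b c : Fin 2,
    pd2 c (fun w => γ w a b) z
      - (∑ d, γ z d b * conn2 G1 G2 z d a c)
      - (∑ d, γ z a d * conn2 G1 G2 z d b c) = 0

/-- `γ_{ab}` is a kinetic metric on `U` for the connection `conn2 G1 G2`:
a smooth symmetric covariantly constant matrix field with nonzero determinant.
The connection is *Riemannian* on `U` iff such a `γ` exists. -/
def IsKineticMetricOn (G1 G2 : ℝ × ℝ → ℝ) (γ : ℝ × ℝ → Fin 2 → Fin 2 → ℝ)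
    (U : Set (ℝ × ℝ)) : Prop :=
  (∀ a b, ContDiffOn ℝ (⊤ : ℕ∞) (fun z => γ z a b) U) ∧
  (∀ z a b, γ z a b = γ z b a) ∧
  CovConstOn G1 G2 γ U ∧
  ∀ z ∈ U, γ z 0 0 * γ z 1 1 - γ z 0 1 * γ z 1 0 ≠ 0

/-- Proposition on Riemannian connections, case 4. For
`Γ¹₁₁ = f'/(2f)`, `Γ²₂₂ = h'/(2h)` on `U = I₁ × I₂` and `c₀ ≠ ±1`, the matrix
field `γ = [[f, c₀√(fh)],[c₀√(fh), h]]` is covariantly constant with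
`det γ = (1−c₀²)fh ≠ 0`; hence the connection is Riemannian with kinetic
metric `γ`. -/
theorem stmt13 (I₁ I₂ : Set ℝ)
    (hI₁ : IsOpen I₁) (hI₁' : I₁.OrdConnected)
    (hI₂ : IsOpen I₂) (hI₂' : I₂.OrdConnected)
    (f h : ℝ → ℝ) (c₀ : ℝ) (hc₀ : c₀ ≠ 1) (hc₀' : c₀ ≠ -1)
    (hf : ContDiffOn ℝ (⊤ : ℕ∞) f I₁) (hf0 : ∀ x ∈ I₁, 0 < f x)
    (hh : ContDiffOn ℝ (⊤ : ℕ∞) h I₂) (hh0 : ∀ y ∈ I₂, 0 < h y) :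
    CovConstOn (fun z => deriv f z.1 / (2 * f z.1)) (fun z => deriv h z.2 / (2 * h z.2))
      (fun z a b =>
        if a = 0 ∧ b = 0 then f z.1
        else if a = 1 ∧ b = 1 then h z.2
        else c₀ * Real.sqrt (f z.1 * h z.2)) (I₁ ×ˢ I₂) ∧
    (∀ z ∈ I₁ ×ˢ I₂,
      f z.1 * h z.2 - (c₀ * Real.sqrt (f z.1 * h z.2)) * (c₀ * Real.sqrt (f z.1 * h z.2)) =
        (1 - c₀ ^ 2) * (f z.1 * h z.2) ∧
      (1 - c₀ ^ 2) * (f z.1 * h z.2) ≠ 0) ∧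
    IsKineticMetricOn (fun z => deriv f z.1 / (2 * f z.1)) (fun z => deriv h z.2 / (2 * h z.2))
      (fun z a b =>
        if a = 0 ∧ b = 0 then f z.1
        else if a = 1 ∧ b = 1 then h z.2
        else c₀ * Real.sqrt (f z.1 * h z.2)) (I₁ ×ˢ I₂) := by

  classical
  have hdet : ∀ z ∈ I₁ ×ˢ I₂,
      f z.1 * h z.2 - (c₀ * Real.sqrt (f z.1 * h z.2)) * (c₀ * Real.sqrt (f z.1 * h z.2)) =
        (1 - c₀ ^ 2) * (f z.1 * h z.2) ∧ (1 - c₀ ^ 2) * (f z.1 * h z.2) ≠ 0 := by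
    intro z hz
    have hf0' := hf0 z.1 hz.1
    have hh0' := hh0 z.2 hz.2
    have hsq : Real.sqrt (f z.1 * h z.2) * Real.sqrt (f z.1 * h z.2) = f z.1 * h z.2 :=
      Real.mul_self_sqrt (mul_pos hf0' hh0').le
    have hc : (1 : ℝ) - c₀ ^ 2 ≠ 0 := by
      intro H
      have : (1 - c₀) * (1 + c₀) = 0 := by ring_nf; linarith [H]
      rcases mul_eq_zero.mp this with h1 | h1
      · exact hc₀ (by linarith)
      · exact hc₀' (by linarith)
    refine ⟨by nlinarith [hsq], mul_ne_zero hc (ne_of_gt (mul_pos hf0' hh0'))⟩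
  have hcov : CovConstOn (fun z => deriv f z.1 / (2 * f z.1))
      (fun z => deriv h z.2 / (2 * h z.2))
      (fun z a b =>
        if a = 0 ∧ b = 0 then f z.1
        else if a = 1 ∧ b = 1 then h z.2
        else c₀ * Real.sqrt (f z.1 * h z.2)) (I₁ ×ˢ I₂) := by
    intro z hz a b c
    have hdf : DifferentiableAt ℝ f z.1 :=
      (hf.contDiffAt (hI₁.mem_nhds hz.1)).differentiableAt (by norm_num)
    have hdh : DifferentiableAt ℝ h z.2 :=
      (hh.contDiffAt (hI₂.mem_nhds hz.2)).differentiableAt (by norm_num)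
    have hf0' := hf0 z.1 hz.1
    have hh0' := hh0 z.2 hz.2
    obtain ⟨e1, e2⟩ := pd_fst f z hdf
    obtain ⟨e3, e4⟩ := pd_snd h z hdh
    obtain ⟨e5, e6⟩ := pd_sqrt f h c₀ z hdf hdh hf0' hh0'
    fin_cases a <;> fin_cases b <;> fin_cases c <;>
      simp only [pd2, conn2, Fin.sum_univ_two, Fin.isValue, Fin.zero_eta, Fin.mk_one,
        if_true, if_false, and_true, and_false, true_and, false_and, and_self,
        zero_ne_one, one_ne_zero, ite_true, ite_false, reduceIte, e1, e2, e3, e4, e5, e6] <;>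
      field_simp <;> ring
  refine ⟨hcov, hdet, ?_, ?_, hcov, ?_⟩
  · intro a b
    have hF : ContDiffOn ℝ (⊤ : ℕ∞) (fun z : ℝ × ℝ => f z.1) (I₁ ×ˢ I₂) :=
      hf.comp contDiff_fst.contDiffOn (fun z hz => hz.1)
    have hH : ContDiffOn ℝ (⊤ : ℕ∞) (fun z : ℝ × ℝ => h z.2) (I₁ ×ˢ I₂) :=
      hh.comp contDiff_snd.contDiffOn (fun z hz => hz.2)
    have hS : ContDiffOn ℝ (⊤ : ℕ∞) (fun z : ℝ × ℝ => c₀ * Real.sqrt (f z.1 * h z.2))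
        (I₁ ×ˢ I₂) := by
      refine ContDiffOn.mul contDiffOn_const ?_
      intro z hz
      have hpos : f z.1 * h z.2 ≠ 0 :=
        ne_of_gt (mul_pos (hf0 z.1 hz.1) (hh0 z.2 hz.2))
      exact (Real.contDiffAt_sqrt hpos).comp_contDiffWithinAt z ((hF z hz).mul (hH z hz))
    fin_cases a <;> fin_cases b <;> simpa using (by first | exact hF | exact hH | exact hS)
  · intro z a b
    fin_cases a <;> fin_cases b <;> simp
  · intro z hz
    have hd := hdet z hz
    simp only [Fin.isValue, zero_ne_one, one_ne_zero, and_true, and_false, true_and,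
      false_and, and_self, ite_true, ite_false, reduceIte]
    intro H
    exact hd.2 (by rw [← hd.1]; linarith [H])
end
end
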